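/- (Quadratic variation under C¹ transformation / log) Let S : [0,∞) → (0,∞) be continuous with continuous quadratic variation [S] along grids (T_N). Then log S admits a continuous quadratic variation along (T_N) and [log S]_t = ∫_0^t S_s^{-2} d[S]_s for all t ≥ 0. -/

import Mathlib

open Filter Topology Set MeasureTheory

/-- A refining sequence of time grids: each grid is a strictly increasing
sequence starting at 0 and tending to infinity; grids are nested and the
mesh tends to zero. -/
structure GridSeq where
  T : ℕ → ℕ → ℝ
  zero : ∀ N, T N 0 = 0
  mono : ∀ N, StrictMono (T N)
  unbounded : ∀ N, Filter.Tendsto (T N) Filter.atTop Filter.atTop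
  nested : ∀ N, Set.range (T N) ⊆ Set.range (T (N + 1))
  mesh : ∀ ε > 0, ∃ N₀, ∀ N ≥ N₀, ∀ i, T N (i + 1) - T N i ≤ ε

/-- The grid sum `∑_{t_i, t_{i+1} ∈ τ, t_{i+1} ≤ t} f(t_i, t_{i+1})`. -/
noncomputable def gridSum (τ : ℕ → ℝ) (f : ℝ → ℝ → ℝ) (t : ℝ) : ℝ :=
  ∑' i : ℕ, if τ (i + 1) ≤ t then f (τ i) (τ (i + 1)) else 0

/-- The grid sums of `f` along the grid sequence `G` converge to `L` at time `t`. -/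
def ConvTo (G : GridSeq) (f : ℝ → ℝ → ℝ) (t L : ℝ) : Prop :=
  Filter.Tendsto (fun N => gridSum (G.T N) f t) Filter.atTop (nhds L)

/-- `X` has continuous quadratic variation `Q` along the grid sequence `G`. -/
def HasQV (G : GridSeq) (X Q : ℝ → ℝ) : Prop :=
  ContinuousOn Q (Set.Ici 0) ∧ Q 0 = 0 ∧
    ∀ t, ConvTo G (fun u v => (X v - X u) ^ 2) t (Q t)

/-- `A` is locally of finite variation on `[0,∞)`. -/
def LocBV (A : ℝ → ℝ) : Prop := ∀ T > 0, BoundedVariationOn A (Set.Icc 0 T)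

/-- `ξ` is an admissible integrand for `X`: locally `ξ_t = g(A_t, X_t)` with
`g ∈ C¹` and `A` continuous of finite variation. -/
def Admissible (X ξ : ℝ → ℝ) : Prop :=
  ∀ T > 0, ∃ (n : ℕ) (g : (Fin n → ℝ) → ℝ → ℝ) (A : ℝ → Fin n → ℝ),
    ContDiff ℝ 1 (Function.uncurry g) ∧
    (∀ k, ContinuousOn (fun t => A t k) (Set.Icc 0 T) ∧
      BoundedVariationOn (fun t => A t k) (Set.Icc 0 T)) ∧
    ∀ t ∈ Set.Icc (0 : ℝ) T, ξ t = g (A t) (X t)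

namespace Stmt11
open scoped Classical

noncomputable def mIdx (G : GridSeq) (N : ℕ) (t : ℝ) : ℕ :=
  Nat.find (((G.unbounded N).eventually_gt_atTop t).exists) - 1

lemma mIdx_spec (G : GridSeq) (N : ℕ) (t : ℝ) (i : ℕ) :
    G.T N (i + 1) ≤ t ↔ i < mIdx G N t := by
  set h := ((G.unbounded N).eventually_gt_atTop t).exists
  have hK : t < G.T N (Nat.find h) := Nat.find_spec h
  rw [mIdx]
  constructor
  · intro hle
    by_contra hlt
    push_neg at hlt
    have h2 : Nat.find h ≤ i + 1 := by omega
    have := (G.mono N).monotone h2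
    linarith
  · intro hlt
    have h2 : i + 1 < Nat.find h := by omega
    have := Nat.find_min h h2
    push_neg at this
    exact this

lemma T_nonneg (G : GridSeq) (N i : ℕ) : 0 ≤ G.T N i := by
  have := (G.mono N).monotone (Nat.zero_le i)
  rw [G.zero N] at this; exact this

lemma T_pos (G : GridSeq) (N i : ℕ) : 0 < G.T N (i + 1) := by
  have := G.mono N (Nat.succ_pos i)
  rw [G.zero N] at this; exact this

lemma mIdx_mono (G : GridSeq) (N : ℕ) {r r' : ℝ} (h : r ≤ r') :
    mIdx G N r ≤ mIdx G N r' := by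
  by_contra hlt
  push_neg at hlt
  have h1 : mIdx G N r' < mIdx G N r := hlt
  have h2 := (mIdx_spec G N r _).2 h1
  have h3 := (mIdx_spec G N r' (mIdx G N r')).1 (le_trans h2 h)
  omega

lemma mIdx_eq_zero (G : GridSeq) (N : ℕ) {t : ℝ} (ht : t ≤ 0) : mIdx G N t = 0 := by
  by_contra h
  have h1 : 0 < mIdx G N t := Nat.pos_of_ne_zero h
  have := (mIdx_spec G N t 0).2 h1
  have := T_pos G N 0
  linarith

lemma T_mIdx_le (G : GridSeq) (N : ℕ) {t : ℝ} (ht : 0 ≤ t) : G.T N (mIdx G N t) ≤ t := by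
  cases' Nat.eq_zero_or_pos (mIdx G N t) with h h
  · rw [h, G.zero N]; exact ht
  · obtain ⟨i, hi⟩ := Nat.exists_eq_succ_of_ne_zero (Nat.pos_iff_ne_zero.mp h)
    rw [hi]
    exact (mIdx_spec G N t i).2 (by omega)

lemma lt_T_mIdx_succ (G : GridSeq) (N : ℕ) (t : ℝ) : t < G.T N (mIdx G N t + 1) := by
  by_contra h
  push_neg at h
  have := (mIdx_spec G N t (mIdx G N t)).1 h
  omega

lemma gridSum_eq (G : GridSeq) (N : ℕ) (f : ℝ → ℝ → ℝ) (t : ℝ) :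
    gridSum (G.T N) f t = ∑ i ∈ Finset.range (mIdx G N t), f (G.T N i) (G.T N (i + 1)) := by
  rw [gridSum, tsum_eq_sum (s := Finset.range (mIdx G N t))]
  · refine Finset.sum_congr rfl fun i hi => ?_
    rw [if_pos ((mIdx_spec G N t i).2 (Finset.mem_range.mp hi))]
  · intro i hi
    rw [if_neg]
    intro h
    exact hi (Finset.mem_range.mpr ((mIdx_spec G N t i).1 h))

lemma gridSum_nonpos (G : GridSeq) (N : ℕ) (f : ℝ → ℝ → ℝ) {t : ℝ} (ht : t ≤ 0) :
    gridSum (G.T N) f t = 0 := by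
  rw [gridSum_eq, mIdx_eq_zero G N ht, Finset.range_zero, Finset.sum_empty]

lemma tendsto_T_mIdx (G : GridSeq) {t : ℝ} (ht : 0 ≤ t) :
    Tendsto (fun N => G.T N (mIdx G N t)) atTop (nhds t) := by
  rw [Metric.tendsto_atTop]
  intro ε hε
  obtain ⟨N₀, hN₀⟩ := G.mesh (ε / 2) (by linarith)
  refine ⟨N₀, fun N hN => ?_⟩
  have h1 := T_mIdx_le G N ht
  have h2 := lt_T_mIdx_succ G N t
  have h3 := hN₀ N hN (mIdx G N t)
  rw [Real.dist_eq, abs_sub_lt_iff]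
  constructor <;> linarith

/-- even/odd subsequences converging to the same limit. -/
lemma tendsto_of_even_odd {a : ℕ → ℝ} {l : ℝ}
    (he : Tendsto (fun n => a (2 * n)) atTop (nhds l))
    (ho : Tendsto (fun n => a (2 * n + 1)) atTop (nhds l)) :
    Tendsto a atTop (nhds l) := by
  rw [Metric.tendsto_atTop] at *
  intro ε hε
  obtain ⟨N₁, h₁⟩ := he ε hε
  obtain ⟨N₂, h₂⟩ := ho ε hε
  refine ⟨2 * N₁ + 2 * N₂ + 2, fun n hn => ?_⟩
  rcases Nat.even_or_odd n with ⟨q, hq⟩ | ⟨q, hq⟩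
  · have : n = 2 * q := by omega
    rw [this]; exact h₁ q (by omega)
  · rw [hq]; exact h₂ q (by omega)

lemma exists_tendsto_of_approx {a : ℕ → ℝ}
    (h : ∀ ε > (0:ℝ), ∃ c : ℝ, ∀ᶠ N in atTop, |a N - c| ≤ ε) :
    ∃ L, Tendsto a atTop (nhds L) := by
  have hc : CauchySeq a := by
    rw [Metric.cauchySeq_iff]
    intro ε hε
    obtain ⟨c, hc⟩ := h (ε / 3) (by linarith)
    obtain ⟨N₀, hN₀⟩ := eventually_atTop.mp hc
    refine ⟨N₀, fun m hm n hn => ?_⟩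
    have h1 := hN₀ m hm
    have h2 := hN₀ n hn
    rw [abs_le] at h1 h2
    rw [Real.dist_eq, abs_sub_lt_iff]
    constructor <;> linarith [h1.1, h1.2, h2.1, h2.2]
  exact cauchySeq_tendsto_of_complete hc

lemma sum_range_blocks (g : ℕ → ℝ) (m : ℕ → ℕ) (hm : Monotone m) (hm0 : m 0 = 0) (k : ℕ) :
    ∑ i ∈ Finset.range (m k), g i = ∑ j ∈ Finset.range k, ∑ i ∈ Finset.Ico (m j) (m (j + 1)), g i := by
  induction k with
  | zero => simp [hm0]
  | succ k ih =>
    rw [Finset.sum_range_succ, ← ih, Finset.range_eq_Ico,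
      ← Finset.sum_Ico_consecutive g (Nat.zero_le (m k)) (hm (Nat.le_succ k))]
    rw [Finset.range_eq_Ico]


/-- MAIN: grid sums of `f(u) * w(u,v)` converge when the pure `w`-sums converge
to `Q r` for every `r`. -/
lemma main (G : GridSeq) (f : ℝ → ℝ) (hf : ContinuousOn f (Set.Ici 0))
    (w : ℕ → ℝ → ℝ → ℝ) (hw : ∀ N (u v : ℝ), u ≤ v → 0 ≤ w N u v)
    (Q : ℝ → ℝ)
    (hconv : ∀ r : ℝ, Tendsto (fun N => gridSum (G.T N) (w N) r) atTop (nhds (Q r)))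
    (t : ℝ) :
    ∃ L, Tendsto (fun N => gridSum (G.T N) (fun u v => f u * w N u v) t) atTop (nhds L) := by
  rcases le_or_gt t 0 with ht | ht
  · exact ⟨0, by simpa [gridSum_nonpos G _ _ ht] using tendsto_const_nhds⟩
  apply exists_tendsto_of_approx
  intro ε hε
  -- bound for f on [0, t]
  obtain ⟨C, hC⟩ := isCompact_Icc.exists_bound_of_continuousOn
    (hf.mono (Set.Icc_subset_Ici_self (a := t) (b := 0)))
  set F : ℝ := max C 0 with hF
  have hFnn : 0 ≤ F := le_max_right _ _
  have hFb : ∀ x ∈ Set.Icc (0:ℝ) t, |f x| ≤ F := fun x hx =>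
    le_trans (by simpa [Real.norm_eq_abs] using hC x hx) (le_max_left _ _)
  set B : ℝ := |Q t| + 1 with hB
  have hBnn : (0:ℝ) ≤ B := by positivity
  set ε' : ℝ := ε / (2 * (B + 1)) with hε'
  have hε'pos : 0 < ε' := by positivity
  -- uniform continuity of f on [0, t]
  have huc := Metric.uniformContinuousOn_iff.mp
    (isCompact_Icc.uniformContinuousOn_of_continuous
      (hf.mono (Set.Icc_subset_Ici_self (a := t) (b := 0))))
  obtain ⟨δ, hδpos, hδ⟩ := huc ε' hε'pos
  -- a partition of [0, t] of mesh t/k < δ/2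
  obtain ⟨k, hk⟩ := exists_nat_gt (2 * t / δ)
  have hkpos : 0 < (k:ℝ) := lt_of_le_of_lt (by positivity) hk
  have hknat : 0 < k := by exact_mod_cast hkpos
  have htk : t / k < δ / 2 := by
    rw [div_lt_div_iff₀ hkpos (by norm_num : (0:ℝ) < 2)]
    rw [div_lt_iff₀ hδpos] at hk
    linarith
  have htkpos : 0 < t / k := by positivity
  set r : ℕ → ℝ := fun j => j * (t / k) with hr
  have hr0 : r 0 = 0 := by simp [hr]
  have hrk : r k = t := by simp only [hr]; field_simp [hkpos.ne']
  have hrmono : Monotone r := fun a b hab => by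
    simp only [hr]
    exact mul_le_mul_of_nonneg_right (by exact_mod_cast hab) (le_of_lt htkpos)
  have hrstep : ∀ j, r (j + 1) - r j = t / k := by
    intro j; simp only [hr]; push_cast; ring
  have hrmem : ∀ j ≤ k, r j ∈ Set.Icc (0:ℝ) t := by
    intro j hj
    constructor
    · simp only [hr]; positivity
    · rw [← hrk]; exact hrmono hj
  set c : ℝ := ∑ j ∈ Finset.range k, f (r j) * (Q (r (j + 1)) - Q (r j)) with hc
  refine ⟨c, ?_⟩
  set ε'' : ℝ := ε / (4 * ((k:ℝ) * F + 1)) with hε''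
  have hε''pos : 0 < ε'' := by positivity
  -- the eventual conditions
  have E0 : ∀ᶠ N in atTop, ∀ i, G.T N (i + 1) - G.T N i ≤ δ / 2 := by
    obtain ⟨N₀, hN₀⟩ := G.mesh (δ / 2) (by linarith)
    exact eventually_atTop.mpr ⟨N₀, hN₀⟩
  have E1 : ∀ᶠ N in atTop, ∀ j ∈ Finset.range (k + 1), |gridSum (G.T N) (w N) (r j) - Q (r j)| ≤ ε'' := by
    rw [eventually_all_finset]
    intro j _
    have := Metric.tendsto_atTop.mp (hconv (r j)) ε'' hε''pos
    obtain ⟨N₀, hN₀⟩ := this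
    exact eventually_atTop.mpr ⟨N₀, fun N hN => le_of_lt (by simpa [Real.dist_eq] using hN₀ N hN)⟩
  have E2 : ∀ᶠ N in atTop, gridSum (G.T N) (w N) t ≤ B := by
    have := Metric.tendsto_atTop.mp (hconv t) 1 one_pos
    obtain ⟨N₀, hN₀⟩ := this
    refine eventually_atTop.mpr ⟨N₀, fun N hN => ?_⟩
    have := hN₀ N hN
    rw [Real.dist_eq, abs_sub_lt_iff] at this
    have h2 : Q t ≤ |Q t| := le_abs_self _
    simp only [hB]; linarith [this.1]
  filter_upwards [E0, E1, E2] with N hE0 hE1 hE2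
  -- notation
  set τ : ℕ → ℝ := G.T N with hτ
  set M : ℕ := mIdx G N t with hM
  set mj : ℕ → ℕ := fun j => mIdx G N (r j) with hmj
  have hmjmono : Monotone mj := fun a b hab => mIdx_mono G N (hrmono hab)
  have hmj0 : mj 0 = 0 := by
    simp only [hmj, hr0]; exact mIdx_eq_zero G N le_rfl
  have hmjk : mj k = M := by simp only [hmj, hrk, hM]
  -- rewrite grid sums as finite sums
  have hGt : gridSum (G.T N) (w N) t = ∑ i ∈ Finset.range M, w N (τ i) (τ (i + 1)) :=
    gridSum_eq G N _ t
  have hGr : ∀ j, gridSum (G.T N) (w N) (r j) = ∑ i ∈ Finset.range (mj j), w N (τ i) (τ (i + 1)) :=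
    fun j => gridSum_eq G N _ (r j)
  have hwnn : ∀ i, 0 ≤ w N (τ i) (τ (i + 1)) := fun i =>
    hw N _ _ (le_of_lt (G.mono N (Nat.lt_succ_self i)))
  rw [gridSum_eq G N _ t]
  -- block decomposition
  rw [show Finset.range M = Finset.range (mj k) by rw [hmjk]] at *
  rw [sum_range_blocks _ mj hmjmono hmj0 k]
  have key : ∀ j ∈ Finset.range k, ∀ i ∈ Finset.Ico (mj j) (mj (j + 1)),
      |f (τ i) - f (r j)| ≤ ε' := by
    intro j hj i hi
    rw [Finset.mem_range] at hj
    rw [Finset.mem_Ico] at hi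
    have hiM : i < M := lt_of_lt_of_le hi.2 (by rw [← hmjk]; exact hmjmono (by omega))
    have hτit : τ (i + 1) ≤ t := (mIdx_spec G N t i).2 hiM
    have hτi_mem : τ i ∈ Set.Icc (0:ℝ) t :=
      ⟨T_nonneg G N i, le_trans (le_of_lt (G.mono N (Nat.lt_succ_self i))) hτit⟩
    have hrj_mem : r j ∈ Set.Icc (0:ℝ) t := hrmem j (by omega)
    -- |τ i - r j| < δ
    have h1 : r j < τ (i + 1) := by
      by_contra hcon
      push_neg at hcon
      have : i < mj j := (mIdx_spec G N (r j) i).1 hcon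
      omega
    have h2 : τ (i + 1) ≤ r (j + 1) := (mIdx_spec G N (r (j + 1)) i).2 hi.2
    have h3 := hE0 i
    have h4 := hrstep j
    have hdist : dist (τ i) (r j) < δ := by
      rw [Real.dist_eq, abs_sub_lt_iff]
      constructor
      · have : τ i < r (j + 1) := lt_of_lt_of_le (G.mono N (Nat.lt_succ_self i)) h2
        linarith
      · linarith
    exact le_of_lt (hδ (τ i) hτi_mem (r j) hrj_mem hdist)
  -- compare with the blocked sum
  have hblock : ∀ j, ∑ i ∈ Finset.Ico (mj j) (mj (j + 1)), w N (τ i) (τ (i + 1)) =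
      gridSum (G.T N) (w N) (r (j + 1)) - gridSum (G.T N) (w N) (r j) := by
    intro j
    rw [hGr, hGr, Finset.sum_Ico_eq_sub _ (hmjmono (Nat.le_succ j))]
  have step1 : |∑ j ∈ Finset.range k, ∑ i ∈ Finset.Ico (mj j) (mj (j + 1)),
        f (τ i) * w N (τ i) (τ (i + 1))
      - ∑ j ∈ Finset.range k, f (r j) *
        (gridSum (G.T N) (w N) (r (j + 1)) - gridSum (G.T N) (w N) (r j))| ≤ ε' * B := by
    rw [← Finset.sum_sub_distrib]
    refine le_trans (Finset.abs_sum_le_sum_abs _ _) ?_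
    have hterm : ∀ j ∈ Finset.range k,
        |∑ i ∈ Finset.Ico (mj j) (mj (j + 1)), f (τ i) * w N (τ i) (τ (i + 1))
          - f (r j) * (gridSum (G.T N) (w N) (r (j + 1)) - gridSum (G.T N) (w N) (r j))|
        ≤ ∑ i ∈ Finset.Ico (mj j) (mj (j + 1)), ε' * w N (τ i) (τ (i + 1)) := by
      intro j hj
      rw [← hblock j, Finset.mul_sum, ← Finset.sum_sub_distrib]
      refine le_trans (Finset.abs_sum_le_sum_abs _ _) (Finset.sum_le_sum fun i hi => ?_)
      rw [← sub_mul, abs_mul, abs_of_nonneg (hwnn i)]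
      exact mul_le_mul_of_nonneg_right (key j hj i hi) (hwnn i)
    refine le_trans (Finset.sum_le_sum hterm) ?_
    simp_rw [← Finset.mul_sum]
    rw [← sum_range_blocks _ mj hmjmono hmj0 k]
    have : ∑ i ∈ Finset.range (mj k), w N (τ i) (τ (i + 1)) ≤ B := by
      rw [← hGt]; exact hE2
    exact mul_le_mul_of_nonneg_left this (le_of_lt hε'pos)
  have step2 : |∑ j ∈ Finset.range k, f (r j) *
        (gridSum (G.T N) (w N) (r (j + 1)) - gridSum (G.T N) (w N) (r j)) - c| ≤
      (k:ℝ) * F * (2 * ε'') := by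
    rw [hc, ← Finset.sum_sub_distrib]
    refine le_trans (Finset.abs_sum_le_sum_abs _ _) ?_
    have hterm : ∀ j ∈ Finset.range k,
        |f (r j) * (gridSum (G.T N) (w N) (r (j + 1)) - gridSum (G.T N) (w N) (r j))
          - f (r j) * (Q (r (j + 1)) - Q (r j))| ≤ F * (2 * ε'') := by
      intro j hj
      rw [Finset.mem_range] at hj
      rw [← mul_sub, abs_mul]
      have h1 := hE1 (j + 1) (Finset.mem_range.mpr (by omega))
      have h2 := hE1 j (Finset.mem_range.mpr (by omega))
      have h3 : |gridSum (G.T N) (w N) (r (j + 1)) - gridSum (G.T N) (w N) (r j)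
          - (Q (r (j + 1)) - Q (r j))| ≤ 2 * ε'' := by
        have : gridSum (G.T N) (w N) (r (j + 1)) - gridSum (G.T N) (w N) (r j)
            - (Q (r (j + 1)) - Q (r j)) =
            (gridSum (G.T N) (w N) (r (j + 1)) - Q (r (j + 1)))
            - (gridSum (G.T N) (w N) (r j) - Q (r j)) := by ring
        rw [this]
        refine le_trans (abs_sub _ _) (by linarith)
      exact mul_le_mul (hFb _ (hrmem j (by omega))) h3 (abs_nonneg _) hFnn
    refine le_trans (Finset.sum_le_sum hterm) ?_
    rw [Finset.sum_const, Finset.card_range, nsmul_eq_mul]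
    ring_nf
    exact le_refl _
  have final : |∑ j ∈ Finset.range k, ∑ i ∈ Finset.Ico (mj j) (mj (j + 1)),
      f (τ i) * w N (τ i) (τ (i + 1)) - c| ≤ ε' * B + (k:ℝ) * F * (2 * ε'') := by
    calc _ ≤ _ + _ := abs_sub_le _ (∑ j ∈ Finset.range k, f (r j) *
        (gridSum (G.T N) (w N) (r (j + 1)) - gridSum (G.T N) (w N) (r j))) _
    _ ≤ _ := add_le_add step1 step2
  have hb1 : ε' * B ≤ ε / 2 := by
    rw [hε']
    rw [div_mul_eq_mul_div, div_le_div_iff₀ (by positivity) (by norm_num : (0:ℝ) < 2)]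
    nlinarith
  have hb2 : (k:ℝ) * F * (2 * ε'') ≤ ε / 2 := by
    rw [hε'']
    have hd : (0:ℝ) < 4 * ((k:ℝ) * F + 1) := by positivity
    rw [mul_comm (2:ℝ), mul_assoc, ← mul_assoc]
    rw [div_mul_eq_mul_div, mul_comm, div_mul_eq_mul_div, div_le_div_iff₀ hd (by norm_num : (0:ℝ) < 2)]
    nlinarith [mul_nonneg (Nat.cast_nonneg k : (0:ℝ) ≤ k) hFnn]
  calc |∑ j ∈ Finset.range k, ∑ i ∈ Finset.Ico (mj j) (mj (j + 1)),
      f (τ i) * w N (τ i) (τ (i + 1)) - c| ≤ ε' * B + (k:ℝ) * F * (2 * ε'') := final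
    _ ≤ ε / 2 + ε / 2 := add_le_add hb1 hb2
    _ = ε := by ring


lemma log_lin {m a b : ℝ} (hm : 0 < m) (ha : m ≤ a) (hb : m ≤ b) :
    |Real.log b - Real.log a - (b - a) / a| ≤ (b - a) ^ 2 / m ^ 2 := by
  have ha0 : 0 < a := lt_of_lt_of_le hm ha
  have hb0 : 0 < b := lt_of_lt_of_le hm hb
  have h1 : Real.log b - Real.log a ≤ (b - a) / a := by
    have h := Real.log_le_sub_one_of_pos (div_pos hb0 ha0)
    rw [Real.log_div hb0.ne' ha0.ne'] at h
    calc Real.log b - Real.log a ≤ b / a - 1 := h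
      _ = (b - a) / a := by field_simp
  have h2 : (b - a) / b ≤ Real.log b - Real.log a := by
    have h := Real.log_le_sub_one_of_pos (div_pos ha0 hb0)
    rw [Real.log_div ha0.ne' hb0.ne'] at h
    calc (b - a) / b = 1 - a / b := by field_simp
      _ ≤ Real.log b - Real.log a := by linarith
  rw [abs_le]
  constructor
  · have key : (b - a) / b - (b - a) / a = -((b - a) ^ 2 / (a * b)) := by
      field_simp; ring
    have hab : m ^ 2 ≤ a * b := by nlinarith
    have h3 : (b - a) ^ 2 / (a * b) ≤ (b - a) ^ 2 / m ^ 2 := by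
      gcongr <;> nlinarith
    linarith
  · have h4 : (0:ℝ) ≤ (b - a) ^ 2 / m ^ 2 := by positivity
    linarith

lemma log_sq_est {m a b : ℝ} (hm : 0 < m) (ha : m ≤ a) (hb : m ≤ b) (hd : |b - a| ≤ 1) :
    |(Real.log b - Real.log a) ^ 2 - (a ^ 2)⁻¹ * (b - a) ^ 2| ≤
      |b - a| * (1 / m ^ 4 + 2 / m ^ 3) * (b - a) ^ 2 := by
  have ha0 : 0 < a := lt_of_lt_of_le hm ha
  set L := Real.log b - Real.log a with hL
  set d := b - a with hdd
  set E := L - d / a with hE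
  have hEb : |E| ≤ d ^ 2 / m ^ 2 := log_lin hm ha hb
  have hda : |2 * (d / a)| ≤ 2 * |d| / m := by
    rw [abs_mul, abs_div]
    rw [abs_of_nonneg (by norm_num : (0:ℝ) ≤ 2), abs_of_pos ha0]
    rw [mul_div_assoc]
    gcongr
  have hfact : L ^ 2 - (a ^ 2)⁻¹ * d ^ 2 = E * (E + 2 * (d / a)) := by
    have : (a ^ 2)⁻¹ * d ^ 2 = (d / a) ^ 2 := by
      rw [div_pow, div_eq_inv_mul]
    rw [this, hE]; ring
  rw [hfact, abs_mul]
  have h1 : |E + 2 * (d / a)| ≤ d ^ 2 / m ^ 2 + 2 * |d| / m :=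
    le_trans (abs_add_le _ _) (add_le_add hEb hda)
  have h2 : |E| * |E + 2 * (d / a)| ≤ (d ^ 2 / m ^ 2) * (d ^ 2 / m ^ 2 + 2 * |d| / m) :=
    mul_le_mul hEb h1 (abs_nonneg _) (by positivity)
  refine le_trans h2 ?_
  set c := m⁻¹ with hc
  have hcpos : 0 < c := by positivity
  have e1 : d ^ 2 / m ^ 2 = d ^ 2 * c ^ 2 := by
    rw [div_eq_mul_inv, ← inv_pow]
  have e2 : 2 * |d| / m = 2 * |d| * c := by
    rw [div_eq_mul_inv]
  have e3 : 1 / m ^ 4 + 2 / m ^ 3 = c ^ 4 + 2 * c ^ 3 := by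
    rw [hc]; field_simp
  have hd2 : d ^ 2 = |d| ^ 2 := (sq_abs d).symm
  rw [e1, e2, e3, hd2]
  have habs : 0 ≤ |d| := abs_nonneg d
  nlinarith [mul_nonneg (mul_nonneg (pow_nonneg habs 3) (pow_nonneg hcpos.le 4))
      (sub_nonneg.mpr hd)]

end Stmt11

namespace Stmt11

lemma tendsto_two_mul : Tendsto (fun n : ℕ => 2 * n) atTop atTop :=
  tendsto_atTop_atTop_of_monotone (fun a b h => by omega) (fun b => ⟨b, by omega⟩)

lemma tendsto_two_mul_add_one : Tendsto (fun n : ℕ => 2 * n + 1) atTop atTop :=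
  tendsto_atTop_atTop_of_monotone (fun a b h => by omega) (fun b => ⟨b, by omega⟩)

end Stmt11

open Stmt11

/-- `log S` has continuous quadratic variation
`[log S]_t = ∫_0^t S_s⁻² d[S]_s` (the Stieltjes integral being realized as a
limit of the corresponding grid sums). -/
theorem stmt11 (G : GridSeq) (S QS : ℝ → ℝ)
    (hS : ContinuousOn S (Set.Ici 0)) (hSpos : ∀ t ∈ Set.Ici (0 : ℝ), 0 < S t)
    (hQS : HasQV G S QS) :
    ∃ QL : ℝ → ℝ, HasQV G (fun t => Real.log (S t)) QL ∧
      ∀ t, ConvTo G (fun u v => ((S u) ^ 2)⁻¹ * (QS v - QS u)) t (QL t) := by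
  obtain ⟨hQc, hQ0, hconv1'⟩ := hQS
  have hconv1 : ∀ r : ℝ, Tendsto (fun N => gridSum (G.T N) (fun u v => (S v - S u) ^ 2) r)
      atTop (nhds (QS r)) := fun r => hconv1' r
  set f : ℝ → ℝ := fun x => ((S x) ^ 2)⁻¹ with hf
  have hfc : ContinuousOn f (Set.Ici 0) :=
    (hS.pow 2).inv₀ (fun x hx => pow_ne_zero 2 (hSpos x hx).ne')
  have hfnn : ∀ x, 0 ≤ f x := fun x => inv_nonneg.mpr (sq_nonneg _)
  -- QS is monotone
  have hQSmono : Monotone QS := by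
    intro s t hst
    refine le_of_tendsto_of_tendsto' (hconv1 s) (hconv1 t) fun N => ?_
    rw [gridSum_eq, gridSum_eq]
    exact Finset.sum_le_sum_of_subset_of_nonneg
      (Finset.range_subset_range.mpr (mIdx_mono G N hst)) (fun i _ _ => sq_nonneg _)
  -- QS (last grid point ≤ r) → QS r
  have hQST : ∀ r : ℝ, 0 ≤ r →
      Tendsto (fun N => QS (G.T N (mIdx G N r))) atTop (nhds (QS r)) := by
    intro r hr
    exact (hQc r hr).tendsto.comp (tendsto_nhdsWithin_iff.mpr
      ⟨tendsto_T_mIdx G hr, Eventually.of_forall fun N => T_nonneg G N _⟩)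
  -- telescoping sums of QS-increments converge to QS r
  have hQStel' : ∀ r : ℝ, Tendsto (fun N => gridSum (G.T N) (fun u v => QS v - QS u) r)
      atTop (nhds (QS r)) := by
    intro r
    have heq : ∀ N, gridSum (G.T N) (fun u v => QS v - QS u) r
        = QS (G.T N (mIdx G N r)) - QS 0 := by
      intro N
      rw [gridSum_eq]
      exact Finset.sum_range_sub (fun i => QS (G.T N i)) (mIdx G N r) |>.trans
        (by rw [G.zero N])
    simp only [heq, hQ0, sub_zero]
    rcases lt_or_ge r 0 with hr | hr
    · have hz : ∀ N, mIdx G N r = 0 := fun N => mIdx_eq_zero G N hr.le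
      simp only [hz, G.zero, hQ0]
      -- QS r = 0 for r < 0
      have h1 := hconv1 r
      have h2 : (fun N => gridSum (G.T N) (fun u v => (S v - S u) ^ 2) r) = fun _ => (0:ℝ) :=
        funext fun N => gridSum_nonpos G N _ hr.le
      rw [h2] at h1
      have : QS r = 0 := (tendsto_nhds_unique h1 tendsto_const_nhds)
      rw [this]
      exact tendsto_const_nhds
    · exact hQST r hr
  -- the parity-mixed weight
  set wpar : ℕ → ℝ → ℝ → ℝ :=
    fun N u v => if Even N then (S v - S u) ^ 2 else QS v - QS u with hwpar
  have hwparnn : ∀ N (u v : ℝ), u ≤ v → 0 ≤ wpar N u v := by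
    intro N u v huv
    by_cases h : Even N
    · simp only [hwpar, if_pos h]; exact sq_nonneg _
    · simp only [hwpar, if_neg h]; exact sub_nonneg.mpr (hQSmono huv)
  have hwpareven : ∀ n : ℕ, wpar (2 * n) = fun u v => (S v - S u) ^ 2 := by
    intro n; funext u v; simp only [hwpar, if_pos (even_two_mul n)]
  have hwparodd : ∀ n : ℕ, wpar (2 * n + 1) = fun u v => QS v - QS u := by
    intro n; funext u v
    have : ¬ Even (2 * n + 1) := by simp [Nat.even_add_one, even_two_mul]
    simp only [hwpar, if_neg this]
  have hwparconv : ∀ r : ℝ, Tendsto (fun N => gridSum (G.T N) (wpar N) r)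
      atTop (nhds (QS r)) := by
    intro r
    apply tendsto_of_even_odd
    · have he : (fun n => gridSum (G.T (2 * n)) (wpar (2 * n)) r)
          = fun n => gridSum (G.T (2 * n)) (fun u v => (S v - S u) ^ 2) r := by
        funext n; rw [hwpareven n]
      rw [he]
      exact (hconv1 r).comp tendsto_two_mul
    · have ho : (fun n => gridSum (G.T (2 * n + 1)) (wpar (2 * n + 1)) r)
          = fun n => gridSum (G.T (2 * n + 1)) (fun u v => QS v - QS u) r := by
        funext n; rw [hwparodd n]
      rw [ho]
      exact (hQStel' r).comp tendsto_two_mul_add_one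
  -- apply MAIN three times
  have hmainpar := main G f hfc wpar hwparnn QS hwparconv
  set QL : ℝ → ℝ := fun t => Classical.choose (hmainpar t) with hQL
  have hQLt : ∀ t, Tendsto (fun N => gridSum (G.T N) (fun u v => f u * wpar N u v) t)
      atTop (nhds (QL t)) := fun t => Classical.choose_spec (hmainpar t)
  have hL1 : ∀ t, Tendsto (fun N => gridSum (G.T N) (fun u v => f u * (S v - S u) ^ 2) t)
      atTop (nhds (QL t)) := by
    intro t
    obtain ⟨L1, h1⟩ := main G f hfc (fun _ u v => (S v - S u) ^ 2)
      (fun N u v _ => sq_nonneg _) QS hconv1 t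
    have heQL := (hQLt t).comp tendsto_two_mul
    have hfun : ((fun N => gridSum (G.T N) (fun u v => f u * wpar N u v) t) ∘ fun n => 2 * n)
        = fun n => gridSum (G.T (2 * n)) (fun u v => f u * (S v - S u) ^ 2) t := by
      funext n
      simp only [Function.comp_apply, hwpareven]
    rw [hfun] at heQL
    have h1e := h1.comp tendsto_two_mul
    have : L1 = QL t := tendsto_nhds_unique h1e heQL
    rwa [this] at h1
  have hL2 : ∀ t, Tendsto (fun N => gridSum (G.T N) (fun u v => f u * (QS v - QS u)) t)
      atTop (nhds (QL t)) := by
    intro t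
    obtain ⟨L2, h2⟩ := main G f hfc (fun _ u v => QS v - QS u)
      (fun N u v huv => sub_nonneg.mpr (hQSmono huv)) QS hQStel' t
    have hoQL := (hQLt t).comp tendsto_two_mul_add_one
    have hfun : ((fun N => gridSum (G.T N) (fun u v => f u * wpar N u v) t) ∘ fun n => 2 * n + 1)
        = fun n => gridSum (G.T (2 * n + 1)) (fun u v => f u * (QS v - QS u)) t := by
      funext n
      simp only [Function.comp_apply, hwparodd]
    rw [hfun] at hoQL
    have h2e := h2.comp tendsto_two_mul_add_one
    have : L2 = QL t := tendsto_nhds_unique h2e hoQL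
    rwa [this] at h2
  -- QL vanishes for t ≤ 0
  have hQLzero : ∀ t : ℝ, t ≤ 0 → QL t = 0 := by
    intro t ht
    have h2 := hL2 t
    have hz : (fun N => gridSum (G.T N) (fun u v => f u * (QS v - QS u)) t) = fun _ => (0:ℝ) :=
      funext fun N => gridSum_nonpos G N _ ht
    rw [hz] at h2
    exact tendsto_nhds_unique h2 tendsto_const_nhds
  -- two-point comparison for QL
  have hQLdiff : ∀ b : ℝ, ∀ Fb : ℝ, (∀ x ∈ Set.Icc (0:ℝ) b, f x ≤ Fb) →
      ∀ t t' : ℝ, 0 ≤ t → t ≤ t' → t' ≤ b →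
      0 ≤ QL t' - QL t ∧ QL t' - QL t ≤ Fb * (QS t' - QS t) := by
    intro b Fb hFb t t' ht htt' ht'b
    have hdiff : ∀ N, gridSum (G.T N) (fun u v => f u * (QS v - QS u)) t'
        - gridSum (G.T N) (fun u v => f u * (QS v - QS u)) t
        = ∑ i ∈ Finset.Ico (mIdx G N t) (mIdx G N t'),
            f (G.T N i) * (QS (G.T N (i + 1)) - QS (G.T N i)) := by
      intro N
      rw [gridSum_eq, gridSum_eq, Finset.sum_Ico_eq_sub _ (mIdx_mono G N htt')]
    have htend := (hL2 t').sub (hL2 t)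
    constructor
    · refine le_of_tendsto_of_tendsto' tendsto_const_nhds htend fun N => ?_
      rw [hdiff N]
      refine Finset.sum_nonneg fun i hi => ?_
      exact mul_nonneg (hfnn _) (sub_nonneg.mpr (hQSmono
        (le_of_lt (G.mono N (Nat.lt_succ_self i)))))
    · have hup : ∀ N, gridSum (G.T N) (fun u v => f u * (QS v - QS u)) t'
          - gridSum (G.T N) (fun u v => f u * (QS v - QS u)) t
          ≤ Fb * (QS (G.T N (mIdx G N t')) - QS (G.T N (mIdx G N t))) := by
        intro N
        rw [hdiff N]
        have hstep : ∀ i ∈ Finset.Ico (mIdx G N t) (mIdx G N t'),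
            f (G.T N i) * (QS (G.T N (i + 1)) - QS (G.T N i))
            ≤ Fb * (QS (G.T N (i + 1)) - QS (G.T N i)) := by
          intro i hi
          rw [Finset.mem_Ico] at hi
          have hτ : G.T N (i + 1) ≤ t' := (mIdx_spec G N t' i).2 hi.2
          have hmem : G.T N i ∈ Set.Icc (0:ℝ) b :=
            ⟨T_nonneg G N i, le_trans (le_of_lt (G.mono N (Nat.lt_succ_self i)))
              (le_trans hτ ht'b)⟩
          exact mul_le_mul_of_nonneg_right (hFb _ hmem)
            (sub_nonneg.mpr (hQSmono (le_of_lt (G.mono N (Nat.lt_succ_self i)))))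
        refine le_trans (Finset.sum_le_sum hstep) ?_
        rw [← Finset.mul_sum, Finset.sum_Ico_eq_sub _ (mIdx_mono G N htt'),
          Finset.sum_range_sub (fun i => QS (G.T N i)), Finset.sum_range_sub (fun i => QS (G.T N i))]
        apply le_of_eq; ring_nf
      have htendR : Tendsto (fun N => Fb * (QS (G.T N (mIdx G N t')) - QS (G.T N (mIdx G N t))))
          atTop (nhds (Fb * (QS t' - QS t))) :=
        ((hQST t' (le_trans ht htt')).sub (hQST t ht)).const_mul Fb
      exact le_of_tendsto_of_tendsto' htend htendR hup
  -- continuity of QL on [0, ∞)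
  have hQLcont : ContinuousOn QL (Set.Ici 0) := by
    intro s hs
    have hs0 : (0:ℝ) ≤ s := hs
    obtain ⟨C, hC⟩ := isCompact_Icc.exists_bound_of_continuousOn
      (hfc.mono (Set.Icc_subset_Ici_self (a := s + 1) (b := 0)))
    set Fb : ℝ := max C 0 with hFbdef
    have hFbnn : 0 ≤ Fb := le_max_right _ _
    have hFbb : ∀ x ∈ Set.Icc (0:ℝ) (s + 1), f x ≤ Fb := fun x hx =>
      le_trans (le_trans (le_abs_self _) (by simpa [Real.norm_eq_abs] using hC x hx))
        (le_max_left _ _)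
    have hkey : ∀ x ∈ Set.Icc (0:ℝ) (s + 1), dist (QL x) (QL s) ≤ Fb * dist (QS x) (QS s) := by
      intro x hx
      have hsmem : s ∈ Set.Icc (0:ℝ) (s + 1) := ⟨hs0, by linarith⟩
      rcases le_total x s with hxs | hxs
      · obtain ⟨h1, h2⟩ := hQLdiff (s + 1) Fb hFbb x s hx.1 hxs (by linarith)
        rw [Real.dist_eq, Real.dist_eq, abs_of_nonpos (by linarith),
          abs_of_nonpos (by linarith [hQSmono hxs])]
        linarith
      · obtain ⟨h1, h2⟩ := hQLdiff (s + 1) Fb hFbb s x hs0 hxs hx.2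
        rw [Real.dist_eq, Real.dist_eq, abs_of_nonneg (by linarith),
          abs_of_nonneg (by linarith [hQSmono hxs])]
        linarith
    have hev : ∀ᶠ x in nhdsWithin s (Set.Ici 0), x ∈ Set.Icc (0:ℝ) (s + 1) := by
      have h1 : ∀ᶠ x in nhdsWithin s (Set.Ici 0), x ∈ Set.Ici (0:ℝ) :=
        eventually_mem_nhdsWithin
      have h2 : ∀ᶠ x in nhds s, x < s + 1 :=
        IsOpen.eventually_mem isOpen_Iio (by simp [lt_add_one s] : s ∈ Set.Iio (s + 1))
      have h2' : ∀ᶠ x in nhdsWithin s (Set.Ici 0), x < s + 1 :=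
        h2.filter_mono nhdsWithin_le_nhds
      filter_upwards [h1, h2'] with x hx1 hx2
      exact ⟨hx1, le_of_lt hx2⟩
    rw [ContinuousWithinAt, tendsto_iff_dist_tendsto_zero]
    apply squeeze_zero' (Eventually.of_forall fun x => dist_nonneg)
      (hev.mono fun x hx => hkey x hx)
    have hQScont : Tendsto (fun x => dist (QS x) (QS s)) (nhdsWithin s (Set.Ici 0)) (nhds 0) :=
      tendsto_iff_dist_tendsto_zero.mp (hQc s hs)
    have := hQScont.const_mul Fb
    simpa using this
  -- QL 0 = 0
  have hQL0 : QL 0 = 0 := hQLzero 0 le_rfl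
  -- the log sums converge to QL t
  have hlog : ∀ t : ℝ, Tendsto (fun N => gridSum (G.T N)
      (fun u v => (Real.log (S v) - Real.log (S u)) ^ 2) t) atTop (nhds (QL t)) := by
    intro t
    rcases lt_or_ge t 0 with ht | ht
    · have hz : (fun N => gridSum (G.T N)
          (fun u v => (Real.log (S v) - Real.log (S u)) ^ 2) t) = fun _ => (0:ℝ) :=
        funext fun N => gridSum_nonpos G N _ ht.le
      rw [hz, hQLzero t ht.le]
      exact tendsto_const_nhds
    · -- difference with the f-weighted sums tends to 0
      have hD : Tendsto (fun N => gridSum (G.T N)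
          (fun u v => (Real.log (S v) - Real.log (S u)) ^ 2) t
          - gridSum (G.T N) (fun u v => f u * (S v - S u) ^ 2) t) atTop (nhds 0) := by
        rw [Metric.tendsto_atTop]
        intro ε hε
        -- the minimum of S on [0, t]
        obtain ⟨x₀, hx₀, hmin⟩ := isCompact_Icc.exists_isMinOn (Set.nonempty_Icc.mpr ht)
          (hS.mono (Set.Icc_subset_Ici_self (a := t) (b := 0)))
        set m0 : ℝ := S x₀ with hm0
        have hm0pos : 0 < m0 := hSpos x₀ hx₀.1
        have hm0le : ∀ y ∈ Set.Icc (0:ℝ) t, m0 ≤ S y := fun y hy => hmin hy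
        set K0 : ℝ := 1 / m0 ^ 4 + 2 / m0 ^ 3 with hK0
        have hK0pos : 0 < K0 := by positivity
        set Bt : ℝ := |QS t| + 1 with hBt
        have hBtpos : (0:ℝ) < Bt := by positivity
        set ε₂ : ℝ := min 1 (ε / (K0 * Bt + 1)) with hε₂
        have hε₂pos : 0 < ε₂ := lt_min one_pos (by positivity)
        have hε₂1 : ε₂ ≤ 1 := min_le_left _ _
        -- uniform continuity of S on [0, t]
        obtain ⟨δS, hδSpos, hδS⟩ := Metric.uniformContinuousOn_iff.mp
          (isCompact_Icc.uniformContinuousOn_of_continuous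
            (hS.mono (Set.Icc_subset_Ici_self (a := t) (b := 0)))) ε₂ hε₂pos
        obtain ⟨N₁, hN₁⟩ := G.mesh (δS / 2) (by linarith)
        obtain ⟨N₂, hN₂⟩ := Metric.tendsto_atTop.mp (hconv1 t) 1 one_pos
        refine ⟨max N₁ N₂, fun N hN => ?_⟩
        have hNm := hN₁ N (le_trans (le_max_left _ _) hN)
        have hNs := hN₂ N (le_trans (le_max_right _ _) hN)
        have hGbd : gridSum (G.T N) (fun u v => (S v - S u) ^ 2) t ≤ Bt := by
          rw [Real.dist_eq, abs_sub_lt_iff] at hNs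
          have := le_abs_self (QS t)
          simp only [hBt]; linarith [hNs.1]
        rw [Real.dist_eq, sub_zero, gridSum_eq, gridSum_eq, ← Finset.sum_sub_distrib]
        have hterm : ∀ i ∈ Finset.range (mIdx G N t),
            |(Real.log (S (G.T N (i + 1))) - Real.log (S (G.T N i))) ^ 2
              - f (G.T N i) * (S (G.T N (i + 1)) - S (G.T N i)) ^ 2|
            ≤ ε₂ * K0 * (S (G.T N (i + 1)) - S (G.T N i)) ^ 2 := by
          intro i hi
          rw [Finset.mem_range] at hi
          have hui : G.T N (i + 1) ≤ t := (mIdx_spec G N t i).2 hi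
          have hmem1 : G.T N i ∈ Set.Icc (0:ℝ) t :=
            ⟨T_nonneg G N i, le_trans (le_of_lt (G.mono N (Nat.lt_succ_self i))) hui⟩
          have hmem2 : G.T N (i + 1) ∈ Set.Icc (0:ℝ) t := ⟨T_nonneg G N _, hui⟩
          have ha : m0 ≤ S (G.T N i) := hm0le _ hmem1
          have hb : m0 ≤ S (G.T N (i + 1)) := hm0le _ hmem2
          have hdist : dist (G.T N (i + 1)) (G.T N i) < δS := by
            rw [Real.dist_eq, abs_of_nonneg (by linarith [G.mono N (Nat.lt_succ_self i)])]
            linarith [hNm i, hδSpos]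
          have hSd : |S (G.T N (i + 1)) - S (G.T N i)| < ε₂ := by
            have := hδS _ hmem2 _ hmem1 hdist
            rwa [Real.dist_eq] at this
          have hest := log_sq_est hm0pos ha hb (le_trans hSd.le hε₂1)
          refine le_trans hest ?_
          apply mul_le_mul_of_nonneg_right _ (sq_nonneg _)
          exact mul_le_mul hSd.le le_rfl (by positivity) hε₂pos.le
        calc |∑ i ∈ Finset.range (mIdx G N t),
              ((Real.log (S (G.T N (i + 1))) - Real.log (S (G.T N i))) ^ 2
                - f (G.T N i) * (S (G.T N (i + 1)) - S (G.T N i)) ^ 2)|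
            ≤ ∑ i ∈ Finset.range (mIdx G N t),
              |(Real.log (S (G.T N (i + 1))) - Real.log (S (G.T N i))) ^ 2
                - f (G.T N i) * (S (G.T N (i + 1)) - S (G.T N i)) ^ 2| :=
              Finset.abs_sum_le_sum_abs _ _
          _ ≤ ∑ i ∈ Finset.range (mIdx G N t),
              ε₂ * K0 * (S (G.T N (i + 1)) - S (G.T N i)) ^ 2 := Finset.sum_le_sum hterm
          _ = ε₂ * K0 * ∑ i ∈ Finset.range (mIdx G N t),
              (S (G.T N (i + 1)) - S (G.T N i)) ^ 2 := by rw [Finset.mul_sum]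
          _ ≤ ε₂ * K0 * Bt := by
              apply mul_le_mul_of_nonneg_left _ (by positivity)
              have h := hGbd
              rw [gridSum_eq G N _ t] at h
              exact h
          _ < ε := by
              have h1 : ε₂ ≤ ε / (K0 * Bt + 1) := min_le_right _ _
              have h2 : ε₂ * K0 * Bt ≤ (ε / (K0 * Bt + 1)) * (K0 * Bt) := by
                rw [mul_assoc]
                exact mul_le_mul h1 le_rfl (by positivity) (by positivity)
              have h3 : (ε / (K0 * Bt + 1)) * (K0 * Bt) < ε := by
                rw [div_mul_eq_mul_div, div_lt_iff₀ (by positivity : (0:ℝ) < K0 * Bt + 1)]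
                have hexp : ε * (K0 * Bt + 1) = ε * (K0 * Bt) + ε := by ring
                linarith [hexp]
              exact lt_of_le_of_lt h2 h3
      have := (hL1 t).add hD
      simp only [add_sub_cancel] at this
      convert this using 2
      ring
  refine ⟨QL, ⟨hQLcont, hQL0, fun t => ?_⟩, fun t => hL2 t⟩
  exact hlog t
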